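/- The commutator of the orthogonal projection onto a box subspace with a coordinate Toeplitz operator is compact: for every box ℬ^{𝔟}_{𝔧} ⊆ ℕ^m and every s ∈ {1,…,m}, the commutator [P^{𝔟}_{𝔧}, T_{z_s}] is a compact operator on L²_a(𝔹^m). -/

import Mathlib

open scoped ENNReal

noncomputable section

/-- The box `ℬ^𝔟_𝔧 ⊆ ℕ^m`. -/
def Box (m : ℕ) (J : Finset (Fin m)) (b : Fin m → ℕ) : Set (Fin m → ℕ) :=
  {n | ∀ j ∈ J, n j ≤ b j}

/-- The Bergman space weight `ω₀(𝔫) = (∏ᵢ nᵢ!)·m!/(|𝔫|+m)!`. -/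
def omega0 (m : ℕ) (n : Fin m → ℕ) : ℝ :=
  ((∏ i, (n i).factorial) * m.factorial : ℕ) / (((∑ i, n i) + m).factorial : ℕ)

/-- `𝔫 + e_p`. -/
def bump (m : ℕ) (p : Fin m) (n : Fin m → ℕ) : Fin m → ℕ :=
  Function.update n p (n p + 1)

/-- The Bergman space `L²_a(𝔹^m)` in coordinates with respect to its orthonormal basis of
normalized monomials `z^𝔫/√ω₀(𝔫)`, `𝔫 ∈ ℕ^m`. -/
abbrev Berg (m : ℕ) := lp (fun _ : (Fin m → ℕ) => ℂ) (2 : ℝ≥0∞)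

lemma bump_injective (m : ℕ) (s : Fin m) : Function.Injective (bump m s) := by
  intro n n' h
  funext i
  have := congrFun h i
  by_cases hi : i = s
  · subst hi; simpa [bump, Function.update_self] using this
  · simpa [bump, Function.update_of_ne hi] using this

lemma prod_bump (m : ℕ) (s : Fin m) (n : Fin m → ℕ) :
    ∏ i, (bump m s n i).factorial = (n s + 1) * ∏ i, (n i).factorial := by
  have h : (fun i => (bump m s n i).factorial)
      = Function.update (fun i => (n i).factorial) s ((n s + 1).factorial) := by
    funext i
    by_cases hi : i = s
    · subst hi; simp [bump, Function.update_self]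
    · simp [bump, Function.update_of_ne hi]
  rw [h, Finset.prod_update_of_mem (Finset.mem_univ s), Nat.factorial_succ,
    mul_assoc, ← Finset.mul_prod_erase Finset.univ _ (Finset.mem_univ s),
    Finset.sdiff_singleton_eq_erase]

lemma sum_bump (m : ℕ) (s : Fin m) (n : Fin m → ℕ) :
    ∑ i, bump m s n i = (∑ i, n i) + 1 := by
  rw [show bump m s n = Function.update n s (n s + 1) from rfl,
    Finset.sum_update_of_mem (Finset.mem_univ s)]
  rw [← Finset.add_sum_erase Finset.univ n (Finset.mem_univ s),
    Finset.sdiff_singleton_eq_erase]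
  ring

lemma omega0_pos (m : ℕ) (n : Fin m → ℕ) : 0 < omega0 m n := by
  unfold omega0
  positivity

lemma omega0_ratio (m : ℕ) (s : Fin m) (n : Fin m → ℕ) :
    omega0 m (bump m s n) / omega0 m n = (n s + 1 : ℝ) / ((∑ i, n i) + m + 1) := by
  unfold omega0
  rw [prod_bump, sum_bump]
  have h1 : (∑ i, n i) + 1 + m = ((∑ i, n i) + m) + 1 := by ring
  rw [h1, Nat.factorial_succ]
  have hA : (0:ℝ) < ((∏ i, (n i).factorial) * m.factorial : ℕ) := by positivity
  have hB : (0:ℝ) < (((∑ i, n i) + m).factorial : ℕ) := by positivity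
  push_cast
  field_simp

/-- Coordinate evaluation as a continuous linear functional on `Berg m`. -/
def evalCLM (m : ℕ) (n : Fin m → ℕ) : Berg m →L[ℂ] ℂ :=
  LinearMap.mkContinuous
    { toFun := fun x => x n
      map_add' := fun x y => rfl
      map_smul' := fun c x => rfl }
    1 (fun x => by
      show ‖x n‖ ≤ 1 * ‖x‖; simpa using lp.norm_apply_le_norm (by norm_num : (2:ℝ≥0∞) ≠ 0) x n)

@[simp] lemma evalCLM_apply (m : ℕ) (n : Fin m → ℕ) (x : Berg m) :
    evalCLM m n x = x n := rfl

lemma orthonormal_single (m : ℕ) :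
    Orthonormal ℂ (fun n : Fin m → ℕ => (lp.single 2 n (1:ℂ) : Berg m)) := by
  classical
  rw [orthonormal_iff_ite]
  intro i j
  rw [lp.inner_single_left]
  by_cases h : i = j
  · subst h; simp [lp.single_apply_self]
  · rw [lp.single_apply_ne (E := fun _ : Fin m → ℕ => ℂ) 2 j 1 h]
    simp [h]

lemma norm_sum_sq {ι : Type*} {E : Type*} [NormedAddCommGroup E] [InnerProductSpace ℂ E]
    {v : ι → E} (hv : Orthonormal ℂ v) (a : ι → ℂ) (t : Finset ι) :
    ‖∑ n ∈ t, a n • v n‖ ^ 2 = ∑ n ∈ t, ‖a n‖ ^ 2 := by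
  have h := hv.inner_sum a a t
  have h2 : (‖∑ n ∈ t, a n • v n‖ : ℝ) ^ 2
      = Complex.re (inner ℂ (∑ n ∈ t, a n • v n) (∑ n ∈ t, a n • v n) : ℂ) := by
    rw [@norm_sq_eq_re_inner ℂ]; rfl
  rw [h2, h, Complex.re_sum]
  refine Finset.sum_congr rfl fun n _ => ?_
  rw [mul_comm, Complex.mul_conj']
  simp [← Complex.ofReal_pow]

lemma isCompact_evalCLM (m : ℕ) (n : Fin m → ℕ) : IsCompactOperator ⇑(evalCLM m n) := by
  refine ⟨Metric.closedBall 0 ‖evalCLM m n‖, isCompact_closedBall _ _, ?_⟩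
  refine Filter.mem_of_superset (Metric.closedBall_mem_nhds (0 : Berg m) one_pos) ?_
  intro x hx
  simp only [Set.mem_preimage, Metric.mem_closedBall, dist_zero_right] at *
  calc ‖evalCLM m n x‖ ≤ ‖evalCLM m n‖ * ‖x‖ := (evalCLM m n).le_opNorm x
    _ ≤ ‖evalCLM m n‖ * 1 := by
        exact mul_le_mul_of_nonneg_left hx (norm_nonneg _)
    _ = ‖evalCLM m n‖ := mul_one _

lemma isCompact_rankOne (m : ℕ) (n : Fin m → ℕ) (v : Berg m) :
    IsCompactOperator ⇑((evalCLM m n).smulRight v) := by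
  have h : ⇑((evalCLM m n).smulRight v) = (fun c : ℂ => c • v) ∘ ⇑(evalCLM m n) := rfl
  rw [h]
  exact (isCompact_evalCLM m n).continuous_comp (continuous_id.smul continuous_const)

lemma isCompact_sum {ι : Type*} (F : Finset ι) (g : ι → (Berg m' →L[ℂ] Berg m'))
    (hg : ∀ n ∈ F, IsCompactOperator ⇑(g n)) :
    IsCompactOperator ⇑(∑ n ∈ F, g n) := by
  classical
  induction F using Finset.induction with
  | empty => simpa using isCompactOperator_zero
  | @insert i t hni ih =>
    rw [Finset.sum_insert hni]
    have h1 := hg i (Finset.mem_insert_self i t)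
    have h2 := ih fun n hn => hg n (Finset.mem_insert_of_mem hn)
    have h3 := h1.add h2
    have h4 : ⇑(g i + ∑ x ∈ t, g x) = fun x => g i x + (∑ x' ∈ t, g x') x := by
      ext x; simp
    rw [h4]
    exact h3

open scoped Classical in
set_option maxHeartbeats 2000000 in
/-- for the multiplication operator `T = T_{z_s}` on `L²_a(𝔹^m)` and the
orthogonal projection `P = P^𝔟_𝔧` onto the span of the monomials indexed by the box
`ℬ^𝔟_𝔧`, the commutator `[P, T_{z_s}]` is compact. -/
theorem proj_mult_commutator_compact (m : ℕ) (J : Finset (Fin m)) (b : Fin m → ℕ)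
    (s : Fin m) (T P : Berg m →L[ℂ] Berg m)
    (hT : ∀ n : Fin m → ℕ,
      T (lp.single 2 n 1) =
        (Real.sqrt (omega0 m (bump m s n) / omega0 m n) : ℂ) • lp.single 2 (bump m s n) 1)
    (hP : ∀ n : Fin m → ℕ,
      P (lp.single 2 n 1) = if n ∈ Box m J b then lp.single 2 n 1 else 0) :
    IsCompactOperator ⇑(P ∘L T - T ∘L P) := by
  classical
  set D := P ∘L T - T ∘L P with hDdef
  set e : (Fin m → ℕ) → Berg m := fun n => lp.single 2 n 1 with hedef
  set c : (Fin m → ℕ) → ℝ := fun n => Real.sqrt (omega0 m (bump m s n) / omega0 m n) with hcdef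
  set d : (Fin m → ℕ) → ℂ := fun n =>
    ((if bump m s n ∈ Box m J b then (1:ℂ) else 0) - (if n ∈ Box m J b then (1:ℂ) else 0))
      * (c n : ℂ) with hddef
  have hc0 : ∀ n, 0 ≤ c n := fun n => Real.sqrt_nonneg _
  -- action of D on basis vectors
  have hD : ∀ n : Fin m → ℕ, D (e n) = d n • e (bump m s n) := by
    intro n
    have h0 : D (e n) = P (T (e n)) - T (P (e n)) := rfl
    rw [h0, hedef]
    simp only
    rw [hT n, map_smul, hP n, hP (bump m s n)]
    by_cases h1 : bump m s n ∈ Box m J b <;> by_cases h2 : n ∈ Box m J b <;>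
      simp only [h1, h2, if_pos, if_neg, hddef, if_true, if_false, map_zero, smul_zero,
        hT n, hcdef] <;>
      simp [sub_smul, smul_smul]
  -- the coefficients are small off a finite set
  have hd_le : ∀ n, ‖d n‖ ≤ c n := by
    intro n
    rw [hddef]
    simp only
    rw [norm_mul, Complex.norm_real, Real.norm_eq_abs, abs_of_nonneg (hc0 n)]
    have : ‖(if bump m s n ∈ Box m J b then (1:ℂ) else 0)
        - (if n ∈ Box m J b then (1:ℂ) else 0)‖ ≤ 1 := by
      split_ifs <;> simp
    calc _ ≤ 1 * c n := mul_le_mul_of_nonneg_right this (hc0 n)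
      _ = c n := one_mul _
  have hsmall : ∀ ε : ℝ, 0 < ε → ∃ F : Finset (Fin m → ℕ), ∀ n ∉ F, ‖d n‖ ≤ ε := by
    intro ε hε
    by_cases hs : s ∈ J
    · obtain ⟨N, hN⟩ := exists_nat_ge ((b s + 1 : ℝ) / ε ^ 2)
      refine ⟨Fintype.piFinset fun _ => Finset.range (N + 1), fun n hn => ?_⟩
      -- if membership statuses agree the coefficient vanishes
      by_cases h1 : bump m s n ∈ Box m J b <;> by_cases h2 : n ∈ Box m J b
      · rw [hddef]; simp [h1, h2, hε.le]
      · -- impossible: bump ∈ Box but n ∉ Box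
        exact absurd (fun j hj => le_trans (by
          by_cases hjs : j = s
          · subst hjs; simp [bump, Function.update_self]
          · simp [bump, Function.update_of_ne hjs]) (h1 j hj)) h2
      · -- main case : n ∈ Box, bump ∉ Box
        refine le_trans (hd_le n) ?_
        rw [hcdef]
        simp only
        rw [omega0_ratio]
        have hns : (n s : ℝ) + 1 ≤ (b s : ℝ) + 1 := by
          have := h2 s hs
          exact_mod_cast Nat.add_le_add_right this 1
        have hsum : (N : ℝ) + 1 ≤ (∑ i, n i : ℕ) + m + 1 := by
          rw [Fintype.mem_piFinset] at hn
          push_neg at hn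
          obtain ⟨i, hi⟩ := hn
          rw [Finset.mem_range, not_lt] at hi
          have h3 : N + 1 ≤ ∑ j, n j :=
            le_trans hi (Finset.single_le_sum (fun j _ => Nat.zero_le (n j)) (Finset.mem_univ i))
          have := Nat.cast_le (α := ℝ).mpr h3
          push_cast at this ⊢
          linarith
        have hrat : ((n s : ℝ) + 1) / ((∑ i, n i : ℕ) + m + 1) ≤ ε ^ 2 := by
          have hpos : (0:ℝ) < (N : ℝ) + 1 := by positivity
          have hpos2 : (0:ℝ) < (∑ i, n i : ℕ) + m + 1 := by positivity
          have step1 : ((n s : ℝ) + 1) / ((∑ i, n i : ℕ) + m + 1) ≤ ((b s : ℝ) + 1) / ((N:ℝ) + 1) :=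
            div_le_div₀ (by positivity) hns hpos hsum
          have step2 : ((b s : ℝ) + 1) / ((N:ℝ) + 1) ≤ ε ^ 2 := by
            rw [div_le_iff₀ hpos]
            have h4 : (b s : ℝ) + 1 ≤ ε ^ 2 * N := by
              rw [div_le_iff₀ (by positivity : (0:ℝ) < ε ^ 2)] at hN
              linarith [hN]
            nlinarith [sq_nonneg ε]
          linarith
        calc Real.sqrt (((n s : ℝ) + 1) / ((∑ i, n i : ℕ) + m + 1))
            ≤ Real.sqrt (ε ^ 2) := Real.sqrt_le_sqrt hrat
          _ = ε := by rw [Real.sqrt_sq hε.le]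
      · rw [hddef]; simp [h1, h2, hε.le]
    · -- s ∉ J : the commutator vanishes on all basis vectors
      refine ⟨∅, fun n _ => ?_⟩
      have : (bump m s n ∈ Box m J b) ↔ (n ∈ Box m J b) := by
        constructor
        · intro h j hj
          have hjs : j ≠ s := fun h' => hs (h' ▸ hj)
          have := h j hj
          simpa [bump, Function.update_of_ne hjs] using this
        · intro h j hj
          have hjs : j ≠ s := fun h' => hs (h' ▸ hj)
          simpa [bump, Function.update_of_ne hjs] using h j hj
      rw [hddef]
      by_cases h2 : n ∈ Box m J b <;> simp [this, h2, hε.le]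
  -- approximation by finite-rank operators
  have h2R : (0:ℝ) < (2:ℝ≥0∞).toReal := by norm_num
  have key : ∀ ε : ℝ, 0 < ε → ∃ K : Berg m →L[ℂ] Berg m,
      IsCompactOperator ⇑K ∧ ‖D - K‖ ≤ ε := by
    intro ε hε
    obtain ⟨F, hF⟩ := hsmall ε hε
    set A : Berg m →L[ℂ] Berg m := ∑ n ∈ F, (evalCLM m n).smulRight (e n) with hAdef
    refine ⟨D ∘L A, ?_, ?_⟩
    · have hA : IsCompactOperator ⇑A :=
        isCompact_sum F _ (fun n _ => isCompact_rankOne m n (e n))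
      have hcoe : ⇑(D ∘L A) = ⇑D ∘ ⇑A := rfl
      rw [hcoe]
      exact hA.continuous_comp D.continuous
    · refine ContinuousLinearMap.opNorm_le_bound _ hε.le fun x => ?_
      set y : Berg m := x - A x with hydef
      -- coordinates of y
      have hAx : A x = ∑ n ∈ F, lp.single 2 n (x n) := by
        rw [hAdef, ContinuousLinearMap.sum_apply]
        refine Finset.sum_congr rfl fun n _ => ?_
        rw [ContinuousLinearMap.smulRight_apply, evalCLM_apply, hedef]
        rw [← lp.single_smul]
        simp [smul_eq_mul]
      have hyc : ∀ k, y k = if k ∈ F then 0 else x k := by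
        intro k
        rw [hydef, hAx]
        have : (x - ∑ n ∈ F, lp.single 2 n (x n)) k
            = x k - (∑ n ∈ F, lp.single 2 n (x n)) k := by
          rw [lp.coeFn_sub]; rfl
        rw [this]
        simp only [lp.coeFn_sum, Finset.sum_apply, lp.single_apply, Finset.sum_dite_eq]
        split_ifs <;> simp_all
      have hyx : ∀ k, ‖y k‖ ≤ ‖x k‖ := by
        intro k; rw [hyc]; split_ifs <;> simp
      have hyF : ∀ n ∈ F, y n = 0 := fun n hn => by rw [hyc]; simp [hn]
      -- ‖y‖ ≤ ‖x‖
      have hsumy : Summable fun i => ‖y i‖ ^ (2:ℝ≥0∞).toReal := (lp.memℓp y).summable h2R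
      have hsumx : Summable fun i => ‖x i‖ ^ (2:ℝ≥0∞).toReal := (lp.memℓp x).summable h2R
      have hynorm : ‖y‖ ≤ ‖x‖ := by
        rw [← Real.rpow_le_rpow_iff (norm_nonneg _) (norm_nonneg _) h2R,
          lp.norm_rpow_eq_tsum h2R, lp.norm_rpow_eq_tsum h2R]
        exact Summable.tsum_le_tsum (fun i =>
          Real.rpow_le_rpow (norm_nonneg _) (hyx i) h2R.le) hsumy hsumx
      -- expansion of D y
      have h1 : HasSum (fun n => (lp.single 2 n (y n) : Berg m)) y :=
        lp.hasSum_single ENNReal.ofNat_ne_top y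
      have h2s : HasSum (fun n => D (lp.single 2 n (y n))) (D y) := h1.mapL D
      have hfun : (fun n => D (lp.single 2 n (y n)))
          = fun n => (y n * d n) • e (bump m s n) := by
        funext n
        have hsingle : (lp.single 2 n (y n) : Berg m) = y n • e n := by
          have h5 : (y n : ℂ) = y n • (1:ℂ) := by simp
          rw [hedef]
          calc (lp.single 2 n (y n) : Berg m) = lp.single 2 n (y n • (1:ℂ)) := by rw [← h5]
            _ = y n • lp.single 2 n (1:ℂ) := lp.single_smul (E := fun _ : Fin m → ℕ => ℂ) 2 n (y n) (1:ℂ)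
        rw [hsingle, map_smul, hD n, smul_smul]
      rw [hfun] at h2s
      -- norm bound on partial sums
      have honb : Orthonormal ℂ (fun n => e (bump m s n)) :=
        (orthonormal_single m).comp (bump m s) (bump_injective m s)
      have hterm : ∀ t : Finset (Fin m → ℕ),
          ‖∑ n ∈ t, (y n * d n) • e (bump m s n)‖ ≤ ε * ‖x‖ := by
        intro t
        have hsq : ‖∑ n ∈ t, (y n * d n) • e (bump m s n)‖ ^ 2
            = ∑ n ∈ t, ‖y n * d n‖ ^ 2 := norm_sum_sq honb _ t
        have hb1 : ∀ n ∈ t, ‖y n * d n‖ ^ 2 ≤ ε ^ 2 * ‖y n‖ ^ 2 := by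
          intro n _
          by_cases hn : n ∈ F
          · have h6 : ‖(y n : ℂ) * d n‖ ^ 2 = 0 := by rw [hyF n hn]; simp
            rw [h6]
            positivity
          · rw [norm_mul, mul_pow]
            have := hF n hn
            calc ‖y n‖ ^ 2 * ‖d n‖ ^ 2 ≤ ‖y n‖ ^ 2 * ε ^ 2 := by
                  apply mul_le_mul_of_nonneg_left _ (by positivity)
                  exact pow_le_pow_left₀ (norm_nonneg _) this 2
              _ = ε ^ 2 * ‖y n‖ ^ 2 := by ring
        have hb2 : ∑ n ∈ t, ‖y n‖ ^ 2 ≤ ‖y‖ ^ 2 := by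
          have := lp.sum_rpow_le_norm_rpow h2R y t
          have hconv : ∀ a : ℝ, 0 ≤ a → a ^ (2:ℝ≥0∞).toReal = a ^ 2 := by
            intro a ha
            rw [show (2:ℝ≥0∞).toReal = ((2:ℕ):ℝ) by norm_num, Real.rpow_natCast]
          rw [hconv _ (norm_nonneg _)] at this
          calc ∑ n ∈ t, ‖y n‖ ^ 2 = ∑ n ∈ t, ‖y n‖ ^ (2:ℝ≥0∞).toReal := by
                refine Finset.sum_congr rfl fun n _ => (hconv _ (norm_nonneg _)).symm
            _ ≤ ‖y‖ ^ 2 := this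
        have hsq2 : ‖∑ n ∈ t, (y n * d n) • e (bump m s n)‖ ^ 2 ≤ (ε * ‖x‖) ^ 2 := by
          rw [hsq]
          calc ∑ n ∈ t, ‖y n * d n‖ ^ 2 ≤ ∑ n ∈ t, ε ^ 2 * ‖y n‖ ^ 2 :=
                Finset.sum_le_sum hb1
            _ = ε ^ 2 * ∑ n ∈ t, ‖y n‖ ^ 2 := by rw [Finset.mul_sum]
            _ ≤ ε ^ 2 * ‖y‖ ^ 2 := mul_le_mul_of_nonneg_left hb2 (by positivity)
            _ ≤ ε ^ 2 * ‖x‖ ^ 2 := by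
                apply mul_le_mul_of_nonneg_left _ (by positivity)
                exact pow_le_pow_left₀ (norm_nonneg _) hynorm 2
            _ = (ε * ‖x‖) ^ 2 := by ring
        have := Real.sqrt_le_sqrt hsq2
        rwa [Real.sqrt_sq (norm_nonneg _), Real.sqrt_sq (by positivity)] at this
      -- conclude
      have hDy : ‖D y‖ ≤ ε * ‖x‖ :=
        le_of_tendsto h2s.norm (Filter.Eventually.of_forall hterm)
      have hgoal : (D - D ∘L A) x = D y := by
        simp [hydef, map_sub]
      rw [hgoal]
      exact hDy
  -- D is in the closure of the compact operators
  have hcl : D ∈ closure {f : Berg m →L[ℂ] Berg m | IsCompactOperator ⇑f} := by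
    rw [Metric.mem_closure_iff]
    intro ε hε
    obtain ⟨K, hK, hKd⟩ := key (ε / 2) (by linarith)
    refine ⟨K, hK, ?_⟩
    rw [dist_eq_norm]
    calc ‖D - K‖ ≤ ε / 2 := hKd
      _ < ε := by linarith
  have hclosed : IsClosed {f : Berg m →L[ℂ] Berg m | IsCompactOperator ⇑f} :=
    isClosed_setOf_isCompactOperator
  exact hclosed.closure_subset hcl
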